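/- Let p ∈ ℝ[t] be squarefree with deg p ≥ 1, and let a11, a12, b11, b12, a21, a22, b21, b22 ∈ ℝ[t] be such that A1 and B1 are coprime in ℝ[t,s], A2 and B2 are coprime in ℝ[t,s], (a12, b12) ≠ (0,0) and (a22, b22) ≠ (0,0) (i.e., both x(t,s) and y(t,s) explicitly depend on s). Then Ξ1 and Ξ2 have no common irreducible factor η ∈ ℝ[t,x] of positive degree in t and of positive degree in x. -/

import Mathlib

/-- The inclusion `ℝ[t] → ℝ[t,x]`, with `ℝ[t,x]` realized as `MvPolynomial (Fin 2) ℝ`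
(variables `0 = t`, `1 = x`). -/
noncomputable def toTX : Polynomial ℝ →ₐ[ℝ] MvPolynomial (Fin 2) ℝ :=
  Polynomial.aeval (MvPolynomial.X 0)

/-- `Ξ1(t,x) = (x·b11(t) − a11(t))² − p(t)·(x·b12(t) − a12(t))²` as an element of
`ℝ[t,x]`. -/
noncomputable def Xi1TX (a11 a12 b11 b12 p : Polynomial ℝ) : MvPolynomial (Fin 2) ℝ :=
  (MvPolynomial.X 1 * toTX b11 - toTX a11) ^ 2 -
    toTX p * (MvPolynomial.X 1 * toTX b12 - toTX a12) ^ 2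

/-- The inclusion `ℝ[t] → ℝ[t,x,y]`, with `ℝ[t,x,y]` realized as
`MvPolynomial (Fin 3) ℝ` (variables `0 = t`, `1 = x`, `2 = y`). -/
noncomputable def toTXY' : Polynomial ℝ →ₐ[ℝ] MvPolynomial (Fin 3) ℝ :=
  Polynomial.aeval (MvPolynomial.X 0)

/-- `Ξ2(t,x,y)` as an element of `ℝ[t,x,y]`. -/
noncomputable def Xi2TXY (a11 a12 b11 b12 a21 a22 b21 b22 : Polynomial ℝ) :
    MvPolynomial (Fin 3) ℝ :=
  toTXY' (a22 * b11 - a21 * b12) * MvPolynomial.X 1 +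
    toTXY' (a11 * b22 - a12 * b21) * MvPolynomial.X 2 +
    toTXY' (b12 * b21 - b11 * b22) * (MvPolynomial.X 1 * MvPolynomial.X 2) -
    toTXY' (a11 * a22 - a12 * a21)


open Polynomial

private lemma aeval_CX (q : Polynomial ℝ) :
    Polynomial.aeval (Polynomial.C Polynomial.X : Polynomial (Polynomial ℝ)) q
      = Polynomial.C q := by
  induction q using Polynomial.induction_on' with
  | add p q hp hq => rw [map_add, map_add, hp, hq]
  | monomial n a =>
      rw [Polynomial.aeval_monomial, ← Polynomial.C_mul_X_pow_eq_monomial]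
      rw [Polynomial.algebraMap_apply, Polynomial.algebraMap_eq, map_mul, map_pow]

private lemma keyunit (u v : Polynomial ℝ) (hv : v ≠ 0) :
    ¬ IsUnit (Polynomial.C u + Polynomial.X * Polynomial.C v) := by
  intro hun
  have h0 := Polynomial.natDegree_eq_zero_of_isUnit hun
  have h2 : (Polynomial.C u + Polynomial.X * Polynomial.C v).coeff 1 = 0 :=
    Polynomial.coeff_eq_zero_of_natDegree_lt (by omega)
  simp at h2
  exact hv h2

private lemma prop_contra (a a' b b' : Polynomial ℝ)
    (hco : ∀ d : Polynomial (Polynomial ℝ),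
      d ∣ (Polynomial.C a + Polynomial.X * Polynomial.C a') →
      d ∣ (Polynomial.C b + Polynomial.X * Polynomial.C b') → IsUnit d)
    (h : ¬(a' = 0 ∧ b' = 0)) (hrel : a * b' = a' * b) : False := by
  classical
  by_cases ha' : a' = 0
  · have hb' : b' ≠ 0 := fun hb => h ⟨ha', hb⟩
    have ha : a = 0 := by
      rcases mul_eq_zero.mp (show a * b' = 0 by rw [hrel, ha', zero_mul]) with h' | h'
      · exact h'
      · exact absurd h' hb'
    exact keyunit b b' hb' (hco _ (by simp [ha, ha']) dvd_rfl)
  by_cases hb' : b' = 0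
  · have hb : b = 0 := by
      rcases mul_eq_zero.mp (show a' * b = 0 by rw [← hrel, hb', mul_zero]) with h' | h'
      · exact absurd h' ha'
      · exact h'
    exact keyunit a a' ha' (hco _ dvd_rfl (by simp [hb, hb']))
  -- main case
  set g := EuclideanDomain.gcd a' b' with hg
  have hg0 : g ≠ 0 := fun h0 => ha' (EuclideanDomain.gcd_eq_zero_iff.mp h0).1
  obtain ⟨a₁, ha₁⟩ := EuclideanDomain.gcd_dvd_left a' b'
  obtain ⟨b₁, hb₁⟩ := EuclideanDomain.gcd_dvd_right a' b'
  have hbez := EuclideanDomain.gcd_eq_gcd_ab a' b'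
  set xx := EuclideanDomain.gcdA a' b'
  set yy := EuclideanDomain.gcdB a' b'
  have hone : a₁ * xx + b₁ * yy = 1 := by
    apply mul_left_cancel₀ hg0
    rw [mul_one]
    calc g * (a₁ * xx + b₁ * yy) = (g * a₁) * xx + (g * b₁) * yy := by ring
      _ = a' * xx + b' * yy := by rw [← ha₁, ← hb₁]
      _ = g := by rw [← hbez]
  have ha₁0 : a₁ ≠ 0 := by
    rintro rfl
    exact ha' (by rw [ha₁, mul_zero])
  have hrel1 : a * b₁ = a₁ * b := by
    apply mul_left_cancel₀ hg0
    calc g * (a * b₁) = a * (g * b₁) := by ring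
      _ = a * b' := by rw [← hb₁]
      _ = a' * b := hrel
      _ = g * (a₁ * b) := by rw [ha₁]; ring
  have hcop : IsCoprime a₁ b₁ := ⟨xx, yy, by linear_combination hone⟩
  have hdvd : a₁ ∣ a := hcop.dvd_of_dvd_mul_right ⟨b, hrel1⟩
  obtain ⟨hh, hhh⟩ := hdvd
  have hb : b = hh * b₁ := by
    apply mul_left_cancel₀ ha₁0
    rw [← hrel1, hhh]; ring
  have hda : (Polynomial.C hh + Polynomial.X * Polynomial.C g)
      ∣ (Polynomial.C a + Polynomial.X * Polynomial.C a') := by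
    refine ⟨Polynomial.C a₁, ?_⟩
    rw [hhh, ha₁, Polynomial.C_mul, Polynomial.C_mul]
    ring
  have hdb : (Polynomial.C hh + Polynomial.X * Polynomial.C g)
      ∣ (Polynomial.C b + Polynomial.X * Polynomial.C b') := by
    refine ⟨Polynomial.C b₁, ?_⟩
    rw [hb, hb₁, Polynomial.C_mul, Polynomial.C_mul]
    ring
  exact keyunit hh g hg0 (hco _ hda hdb)

private lemma descent (p : Polynomial ℝ) (hp : Squarefree p) (hdeg : 1 ≤ p.natDegree) :
    ∀ n : ℕ, ∀ u v : Polynomial ℝ, u.natDegree < n → u ^ 2 = p * v ^ 2 → v = 0 := by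
  have hp0 : p ≠ 0 := fun h => by simp [h] at hdeg
  intro n
  induction n with
  | zero => intro u v h; omega
  | succ n ih =>
    intro u v hlt heq
    by_contra hv
    have hpu : p ∣ u := (hp.dvd_pow_iff_dvd two_ne_zero).mp ⟨v ^ 2, heq⟩
    obtain ⟨w, hw⟩ := hpu
    have hvw : v ^ 2 = p * w ^ 2 := by
      apply mul_left_cancel₀ hp0
      calc p * v ^ 2 = u ^ 2 := heq.symm
        _ = p * (p * w ^ 2) := by rw [hw]; ring
    have hw0 : w ≠ 0 := by
      rintro rfl
      exact hv (by simpa [pow_eq_zero_iff] using hvw)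
    have d1 : u.natDegree = p.natDegree + w.natDegree := by
      rw [hw, Polynomial.natDegree_mul hp0 hw0]
    have d2 : 2 * v.natDegree = p.natDegree + 2 * w.natDegree := by
      have := congrArg Polynomial.natDegree hvw
      rwa [Polynomial.natDegree_pow, Polynomial.natDegree_mul hp0 (pow_ne_zero _ hw0),
        Polynomial.natDegree_pow] at this
    exact hw0 (ih v w (by omega) hvw)

private lemma sq_eq (p : Polynomial ℝ) (hp : Squarefree p) (hdeg : 1 ≤ p.natDegree)
    (u v : Polynomial ℝ) (h : u ^ 2 = p * v ^ 2) : v = 0 ∧ u = 0 := by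
  have hv : v = 0 := descent p hp hdeg (u.natDegree + 1) u v (by omega) h
  refine ⟨hv, ?_⟩
  have : u ^ 2 = 0 := by rw [h, hv]; ring
  simpa [pow_eq_zero_iff] using this

private lemma degreeOf_one_toTX (c : Polynomial ℝ) :
    MvPolynomial.degreeOf 1 (toTX c) = 0 := by
  induction c using Polynomial.induction_on' with
  | add p q hp hq =>
      have h := MvPolynomial.degreeOf_add_le 1 (toTX p) (toTX q)
      rw [map_add]
      rw [hp, hq] at h
      omega
  | monomial n a =>
      have h1 : toTX (Polynomial.monomial n a)
          = MvPolynomial.C a * MvPolynomial.X 0 ^ n := by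
        rw [toTX, Polynomial.aeval_monomial, MvPolynomial.algebraMap_eq]
      have h2 := MvPolynomial.degreeOf_mul_le 1
        (MvPolynomial.C a : MvPolynomial (Fin 2) ℝ) (MvPolynomial.X 0 ^ n)
      have h3 := MvPolynomial.degreeOf_pow_le 1
        (MvPolynomial.X (0 : Fin 2) : MvPolynomial (Fin 2) ℝ) n
      have h4 : MvPolynomial.degreeOf 1 (MvPolynomial.X (0 : Fin 2) : MvPolynomial (Fin 2) ℝ)
          = 0 := by
        rw [MvPolynomial.degreeOf_X]
        norm_num
      rw [h1]
      rw [MvPolynomial.degreeOf_C] at h2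
      rw [h4] at h3
      omega


/-- If `A1, B1` are coprime in `ℝ[t,s]`, `A2, B2` are coprime in `ℝ[t,s]`, and both
`x(t,s)` and `y(t,s)` explicitly depend on `s`, then `Ξ1` and `Ξ2` have no common
irreducible factor `η ∈ ℝ[t,x]` of positive degree in `t` and positive degree in `x`
(where `ℝ[t,x]` is embedded in `ℝ[t,x,y]` via renaming of variables). -/
theorem no_common_tx_factor (a11 a12 b11 b12 a21 a22 b21 b22 p : Polynomial ℝ)
    (hp : Squarefree p) (hdeg : 1 ≤ p.natDegree)
    (hco1 : ∀ d : Polynomial (Polynomial ℝ),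
      d ∣ (Polynomial.C a11 + Polynomial.X * Polynomial.C a12) →
      d ∣ (Polynomial.C b11 + Polynomial.X * Polynomial.C b12) → IsUnit d)
    (hco2 : ∀ d : Polynomial (Polynomial ℝ),
      d ∣ (Polynomial.C a21 + Polynomial.X * Polynomial.C a22) →
      d ∣ (Polynomial.C b21 + Polynomial.X * Polynomial.C b22) → IsUnit d)
    (h1 : ¬(a12 = 0 ∧ b12 = 0)) (h2 : ¬(a22 = 0 ∧ b22 = 0)) :
    ¬∃ η : MvPolynomial (Fin 2) ℝ, Irreducible η ∧
        0 < MvPolynomial.degreeOf 0 η ∧ 0 < MvPolynomial.degreeOf 1 η ∧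
        η ∣ Xi1TX a11 a12 b11 b12 p ∧
        MvPolynomial.rename Fin.castSucc η ∣
          Xi2TXY a11 a12 b11 b12 a21 a22 b21 b22 := by
  classical
  rintro ⟨η, -, -, hd1, hXi1, hXi2⟩
  set Φ : MvPolynomial (Fin 2) ℝ →ₐ[ℝ] Polynomial (Polynomial ℝ) :=
    MvPolynomial.aeval ![Polynomial.C Polynomial.X, Polynomial.X] with hΦdef
  have hΦX1 : Φ (MvPolynomial.X 1) = Polynomial.X := by
    rw [hΦdef, MvPolynomial.aeval_X]; rfl
  have hΦtoTX : ∀ q : Polynomial ℝ, Φ (toTX q) = Polynomial.C q := by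
    intro q
    rw [toTX, ← Polynomial.aeval_algHom_apply]
    have h0 : Φ (MvPolynomial.X 0) = Polynomial.C Polynomial.X := by
      rw [hΦdef, MvPolynomial.aeval_X]; rfl
    rw [h0, aeval_CX]
  -- the three coefficient polynomials of Ξ2
  set c1 := a22 * b11 - a21 * b12 with hc1def
  set c0 := a11 * a22 - a12 * a21 with hc0def
  set d1' := b12 * b21 - b11 * b22 with hd1def
  set d0' := a11 * b22 - a12 * b21 with hd0def
  -- evaluation maps χ c : ℝ[t,x,y] → ℝ[t][x]
  have hχrename : ∀ c : Polynomial (Polynomial ℝ),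
      (MvPolynomial.aeval ![Polynomial.C Polynomial.X, Polynomial.X, c] :
        MvPolynomial (Fin 3) ℝ →ₐ[ℝ] Polynomial (Polynomial ℝ))
        (MvPolynomial.rename Fin.castSucc η) = Φ η := by
    intro c
    rw [MvPolynomial.aeval_rename]
    have : (![Polynomial.C Polynomial.X, Polynomial.X, c] ∘ Fin.castSucc)
        = ![Polynomial.C Polynomial.X, Polynomial.X] := by
      funext i
      fin_cases i <;> rfl
    rw [this, hΦdef]
  have hχtoTXY : ∀ (c : Polynomial (Polynomial ℝ)) (q : Polynomial ℝ),
      (MvPolynomial.aeval ![Polynomial.C Polynomial.X, Polynomial.X, c] :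
        MvPolynomial (Fin 3) ℝ →ₐ[ℝ] Polynomial (Polynomial ℝ)) (toTXY' q)
        = Polynomial.C q := by
    intro c q
    rw [toTXY', ← Polynomial.aeval_algHom_apply]
    have h0 : (MvPolynomial.aeval ![Polynomial.C Polynomial.X, Polynomial.X, c] :
        MvPolynomial (Fin 3) ℝ →ₐ[ℝ] Polynomial (Polynomial ℝ)) (MvPolynomial.X 0)
        = Polynomial.C Polynomial.X := by
      rw [MvPolynomial.aeval_X]; rfl
    rw [h0, aeval_CX]
  have hP : (MvPolynomial.aeval ![Polynomial.C Polynomial.X, Polynomial.X, 0] :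
      MvPolynomial (Fin 3) ℝ →ₐ[ℝ] Polynomial (Polynomial ℝ))
      (Xi2TXY a11 a12 b11 b12 a21 a22 b21 b22)
      = Polynomial.C c1 * Polynomial.X + Polynomial.C (-c0) := by
    rw [hc1def, hc0def, Xi2TXY]
    simp only [map_add, map_sub, map_mul, hχtoTXY, MvPolynomial.aeval_X]
    simp only [Matrix.cons_val_one, Matrix.cons_val_zero, Matrix.head_cons, Matrix.cons_val_two, Matrix.tail_cons,
      map_neg, Polynomial.C_sub, Polynomial.C_mul]
    ring
  have hQ : (MvPolynomial.aeval ![Polynomial.C Polynomial.X, Polynomial.X, 1] :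
      MvPolynomial (Fin 3) ℝ →ₐ[ℝ] Polynomial (Polynomial ℝ))
      (Xi2TXY a11 a12 b11 b12 a21 a22 b21 b22)
      = (Polynomial.C c1 * Polynomial.X + Polynomial.C (-c0))
        + (Polynomial.C d1' * Polynomial.X + Polynomial.C d0') := by
    rw [hc1def, hc0def, hd1def, hd0def, Xi2TXY]
    simp only [map_add, map_sub, map_mul, hχtoTXY, MvPolynomial.aeval_X]
    simp only [Matrix.cons_val_one, Matrix.cons_val_zero, Matrix.head_cons, Matrix.cons_val_two, Matrix.tail_cons,
      map_neg, Polynomial.C_sub, Polynomial.C_mul]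
    ring
  have hdvdP : Φ η ∣ Polynomial.C c1 * Polynomial.X + Polynomial.C (-c0) := by
    have h := map_dvd (MvPolynomial.aeval ![Polynomial.C Polynomial.X, Polynomial.X, 0] :
      MvPolynomial (Fin 3) ℝ →ₐ[ℝ] Polynomial (Polynomial ℝ)) hXi2
    rwa [hχrename, hP] at h
  have hdvdQ : Φ η ∣ Polynomial.C d1' * Polynomial.X + Polynomial.C d0' := by
    have h := map_dvd (MvPolynomial.aeval ![Polynomial.C Polynomial.X, Polynomial.X, 1] :
      MvPolynomial (Fin 3) ℝ →ₐ[ℝ] Polynomial (Polynomial ℝ)) hXi2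
    rw [hχrename, hQ] at h
    exact (dvd_add_right hdvdP).mp h
  have hdvdXi1 : Φ η ∣ (Polynomial.X * Polynomial.C b11 - Polynomial.C a11) ^ 2
      - Polynomial.C p * (Polynomial.X * Polynomial.C b12 - Polynomial.C a12) ^ 2 := by
    have h := map_dvd Φ hXi1
    have hE : Φ (Xi1TX a11 a12 b11 b12 p)
        = (Polynomial.X * Polynomial.C b11 - Polynomial.C a11) ^ 2
          - Polynomial.C p * (Polynomial.X * Polynomial.C b12 - Polynomial.C a12) ^ 2 := by
      rw [Xi1TX]
      simp only [map_sub, map_mul, map_pow, hΦtoTX, hΦX1]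
    rwa [hE] at h
  -- positive degree in x
  have hdegη : 1 ≤ (Φ η).natDegree := by
    by_contra hcon
    have h0 : (Φ η).natDegree = 0 := by omega
    obtain ⟨c, hc⟩ := Polynomial.natDegree_eq_zero.mp h0
    have hli : (Polynomial.aevalTower toTX (MvPolynomial.X 1)).comp Φ
        = AlgHom.id ℝ (MvPolynomial (Fin 2) ℝ) := by
      apply MvPolynomial.algHom_ext
      intro i
      fin_cases i <;>
        simp [hΦdef, toTX, Polynomial.aevalTower_C, Polynomial.aevalTower_X]
    have hηc : η = toTX c := by
      have := DFunLike.congr_fun hli η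
      simp only [AlgHom.coe_comp, Function.comp_apply, AlgHom.id_apply] at this
      rw [← this, ← hc, Polynomial.aevalTower_C]
    rw [hηc, degreeOf_one_toTX] at hd1
    omega
  by_cases hz : c1 = 0 ∧ c0 = 0 ∧ d1' = 0 ∧ d0' = 0
  · -- degenerate case: Ξ2 ≡ 0, contradiction with coprimality of A2, B2
    obtain ⟨e1, e2, e3, e4⟩ := hz
    rw [hc1def] at e1; rw [hc0def] at e2; rw [hd1def] at e3; rw [hd0def] at e4
    have hrel : a21 * b22 = a22 * b21 := by
      rcases not_and_or.mp h1 with ha12 | hb12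
      · apply mul_left_cancel₀ ha12
        linear_combination (-b22) * e2 + a22 * e4
      · apply mul_left_cancel₀ hb12
        linear_combination (-b22) * e1 - a22 * e3
    exact prop_contra a21 a22 b21 b22 hco2 h2 hrel
  · -- nondegenerate: Φ η divides a nonzero polynomial of degree ≤ 1
    have coeffs : ∀ s r : Polynomial ℝ,
        Polynomial.C s * Polynomial.X + Polynomial.C r = 0 → s = 0 ∧ r = 0 := by
      intro s r h
      constructor
      · have := congrArg (fun q => Polynomial.coeff q 1) h
        simpa using this
      · have := congrArg (fun q => Polynomial.coeff q 0) h
        simpa using this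
    have main : ∀ R : Polynomial (Polynomial ℝ), Φ η ∣ R → R ≠ 0 → R.natDegree ≤ 1 → False := by
      intro R hdvd hne hdeg1
      have hd : (Φ η).natDegree = 1 :=
        le_antisymm (le_trans (Polynomial.natDegree_le_of_dvd hdvd hne) hdeg1) hdegη
      have hη0 : Φ η ≠ 0 := by
        intro h0
        rw [h0] at hd
        simp at hd
      set e := (Φ η).coeff 1 with hedef
      set f := (Φ η).coeff 0 with hfdef
      have he : e ≠ 0 := by
        have := Polynomial.leadingCoeff_ne_zero.mpr hη0
        rwa [Polynomial.leadingCoeff, hd] at this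
      have hform : Φ η = Polynomial.C e * Polynomial.X + Polynomial.C f :=
        Polynomial.eq_X_add_C_of_degree_le_one (Polynomial.natDegree_le_iff_degree_le.mp hd.le)
      -- pass to the fraction field
      set K := FractionRing (Polynomial ℝ)
      set φ : Polynomial ℝ →+* K := algebraMap (Polynomial ℝ) K with hφdef
      have hφinj : Function.Injective φ := IsFractionRing.injective _ _
      have hφe : φ e ≠ 0 := fun h => he (hφinj (by rw [h, map_zero]))
      set x0 : K := -(φ f) / (φ e) with hx0def
      have hη0' : Polynomial.eval₂ φ x0 (Φ η) = 0 := by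
        rw [hform]
        rw [Polynomial.eval₂_add, Polynomial.eval₂_mul, Polynomial.eval₂_C,
          Polynomial.eval₂_C, Polynomial.eval₂_X, hx0def]
        rw [mul_comm, div_mul_cancel₀ _ hφe]
        ring
      obtain ⟨g, hg⟩ := hdvdXi1
      have hψΞ : (x0 * φ b11 - φ a11) ^ 2 - φ p * (x0 * φ b12 - φ a12) ^ 2 = 0 := by
        have h := congrArg (Polynomial.eval₂ φ x0) hg
        rw [Polynomial.eval₂_mul, hη0', zero_mul] at h
        simp only [Polynomial.eval₂_sub, Polynomial.eval₂_mul, Polynomial.eval₂_pow,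
          Polynomial.eval₂_X, Polynomial.eval₂_C] at h
        exact h
      have hf : φ f = -(x0 * φ e) := by
        rw [hx0def, div_mul_cancel₀ _ hφe]; ring
      have key : (f * b11 + e * a11) ^ 2 = p * (f * b12 + e * a12) ^ 2 := by
        apply hφinj
        simp only [map_mul, map_add, map_pow]
        rw [hf]
        linear_combination (φ e) ^ 2 * hψΞ
      obtain ⟨hv0, hu0⟩ := sq_eq p hp hdeg _ _ key
      have hrel : a11 * b12 = a12 * b11 := by
        apply mul_left_cancel₀ he
        linear_combination b12 * hu0 - b11 * hv0
      exact prop_contra a11 a12 b11 b12 hco1 h1 hrel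
    by_cases hPz : Polynomial.C c1 * Polynomial.X + Polynomial.C (-c0) = 0
    · obtain ⟨hc1z, hc0z⟩ := coeffs _ _ hPz
      have hQz : Polynomial.C d1' * Polynomial.X + Polynomial.C d0' ≠ 0 := by
        intro h
        obtain ⟨hd1z, hd0z⟩ := coeffs _ _ h
        exact hz ⟨hc1z, by simpa using hc0z, hd1z, hd0z⟩
      exact main _ hdvdQ hQz Polynomial.natDegree_linear_le
    · exact main _ hdvdP hPz Polynomial.natDegree_linear_le
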